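/- Let f : ℝ → H be continuous with values in a normed space H, twice continuously differentiable, and let τ > 0, tₘ ∈ ℝ. Then ‖f(tₘ)‖ ≤ (1/(2τ))·∫_{tₘ-τ}^{tₘ+τ} ‖f(r)‖ dr + (τ/2)·∫_{tₘ-τ}^{tₘ+τ} ‖f''(r)‖ dr. -/

import Mathlib

open Set intervalIntegral MeasureTheory

/-- Averaging estimate: the value at the midpoint is controlled by the
integral averages of `‖f‖` and `‖f''‖` over `[tₘ-τ, tₘ+τ]`. -/
theorem midpoint_value_average_bound
    {H : Type*} [NormedAddCommGroup H] [NormedSpace ℝ H] [CompleteSpace H]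
    (f : ℝ → H) (hf : ContDiff ℝ 2 f)
    (τ tm : ℝ) (hτ : 0 < τ) :
    ‖f tm‖ ≤ (1 / (2 * τ)) * ∫ r in (tm - τ)..(tm + τ), ‖f r‖
        + (τ / 2) * ∫ r in (tm - τ)..(tm + τ), ‖iteratedDeriv 2 f r‖ := by
  have hf' : ContDiff ℝ 1 (deriv f) := by
    have h2 : ContDiff ℝ ((1 : ℕ) + 1) f := by exact_mod_cast hf
    exact ((contDiff_succ_iff_deriv.mp h2).2.2)
  have hfd : Differentiable ℝ f := hf.differentiable (by norm_num)
  have hf'd : Differentiable ℝ (deriv f) := hf'.differentiable one_ne_zero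
  have hf''c : Continuous (deriv (deriv f)) := by
    have h1 : ContDiff ℝ ((0 : ℕ) + 1) (deriv f) := by exact_mod_cast hf'
    exact ((contDiff_succ_iff_deriv.mp h1).2.2).continuous
  have hι2 : iteratedDeriv 2 f = deriv (deriv f) := by
    rw [iteratedDeriv_succ, iteratedDeriv_one]
  have hfc : Continuous f := hfd.continuous
  have hInt : ∀ a b : ℝ, IntervalIntegrable f volume a b := fun a b =>
    hfc.intervalIntegrable a b
  -- F is the antiderivative
  set F : ℝ → H := fun x => ∫ r in (tm - τ)..x, f r with hF
  have hFd : ∀ x : ℝ, HasDerivAt F (f x) x := fun x =>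
    integral_hasDerivAt_right (hInt _ _) (hfc.stronglyMeasurableAtFilter _ _)
      hfc.continuousAt
  set M : ℝ := ∫ r in (tm - τ)..(tm + τ), ‖deriv (deriv f) r‖ with hM
  have hM0 : 0 ≤ M := by
    apply intervalIntegral.integral_nonneg (by linarith)
    intro x _; exact norm_nonneg _
  -- ψ and its properties
  set ψ : ℝ → H := fun t => f (tm + t) + f (tm - t) - (2 : ℝ) • f tm with hψdef
  have hplus : ∀ t : ℝ, HasDerivAt (fun s : ℝ => tm + s) 1 t := by
    intro t; simpa using (hasDerivAt_id t).const_add tm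
  have hminus : ∀ t : ℝ, HasDerivAt (fun s : ℝ => tm - s) (-1) t := by
    intro t; simpa using (hasDerivAt_id t).const_sub tm
  have hψd : ∀ t : ℝ, HasDerivAt ψ (deriv f (tm + t) - deriv f (tm - t)) t := by
    intro t
    have h1 : HasDerivAt (fun t : ℝ => f (tm + t)) (deriv f (tm + t)) t := by
      simpa [Function.comp_def] using HasDerivAt.scomp t ((hfd (tm + t)).hasDerivAt) (hplus t)
    have h2 : HasDerivAt (fun t : ℝ => f (tm - t)) (-(deriv f (tm - t))) t := by
      simpa [Function.comp_def] using HasDerivAt.scomp t ((hfd (tm - t)).hasDerivAt) (hminus t)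
    rw [hψdef]
    simpa [sub_eq_add_neg] using ((h1.add h2).sub_const ((2 : ℝ) • f tm))
  have hψbound : ∀ t ∈ Icc (0 : ℝ) τ, ‖ψ t‖ ≤ M * τ := by
    intro t ht
    have hψ0 : ψ 0 = 0 := by simp [hψdef, two_smul]
    have key : ∀ s ∈ Ico (0 : ℝ) τ, ‖deriv f (tm + s) - deriv f (tm - s)‖ ≤ M := by
      intro s hs
      have heq : deriv f (tm + s) - deriv f (tm - s)
          = ∫ r in (tm - s)..(tm + s), deriv (deriv f) r := by
        rw [intervalIntegral.integral_deriv_eq_sub (fun x _ => hf'd x)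
          (hf''c.intervalIntegrable _ _)]
      rw [heq]
      calc ‖∫ r in (tm - s)..(tm + s), deriv (deriv f) r‖
          ≤ ∫ r in (tm - s)..(tm + s), ‖deriv (deriv f) r‖ :=
            intervalIntegral.norm_integral_le_integral_norm (by linarith [hs.1])
        _ ≤ M := by
            apply intervalIntegral.integral_mono_interval (by linarith [hs.2.le])
              (by linarith [hs.1]) (by linarith [hs.2.le])
            · filter_upwards with x using norm_nonneg _
            · exact (hf''c.norm).intervalIntegrable _ _
    have := norm_image_sub_le_of_norm_deriv_le_segment'
      (f := ψ) (f' := fun s => deriv f (tm + s) - deriv f (tm - s)) (C := M)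
      (fun s _ => (hψd s).hasDerivWithinAt) key t ht
    rw [hψ0, sub_zero] at this
    calc ‖ψ t‖ ≤ M * (t - 0) := this
      _ ≤ M * τ := by nlinarith [ht.1, ht.2]
  -- φ and the main MVT
  set φ : ℝ → H := fun t => F (tm + t) - F (tm - t) - (2 * t) • f tm with hφdef
  have hφd : ∀ t : ℝ, HasDerivAt φ (ψ t) t := by
    intro t
    have h1 : HasDerivAt (fun t : ℝ => F (tm + t)) (f (tm + t)) t := by
      simpa [Function.comp_def] using HasDerivAt.scomp t (hFd (tm + t)) (hplus t)
    have h2 : HasDerivAt (fun t : ℝ => F (tm - t)) (-(f (tm - t))) t := by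
      simpa [Function.comp_def] using HasDerivAt.scomp t (hFd (tm - t)) (hminus t)
    have h3 : HasDerivAt (fun t : ℝ => (2 * t) • f tm) ((2 : ℝ) • f tm) t := by
      simpa using ((hasDerivAt_id t).const_mul (2 : ℝ)).smul_const (f tm)
    rw [hφdef, hψdef]
    have := (h1.sub h2).sub h3
    simpa [sub_sub, add_comm, Pi.sub_def, Pi.add_def] using this
  have hφ0 : φ 0 = 0 := by simp [hφdef]
  have hφτ : ‖φ τ‖ ≤ M * τ * τ := by
    have := norm_image_sub_le_of_norm_deriv_le_segment'
      (f := φ) (f' := ψ) (C := M * τ)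
      (fun s _ => (hφd s).hasDerivWithinAt)
      (fun s hs => hψbound s ⟨hs.1, hs.2.le⟩) τ ⟨hτ.le, le_rfl⟩
    simp only [hφ0, sub_zero] at this
    nlinarith
  -- combine
  have hgτ : F (tm + τ) - F (tm - τ) = ∫ r in (tm - τ)..(tm + τ), f r := by
    simp [hF]
  have hnormg : ‖F (tm + τ) - F (tm - τ)‖ ≤ ∫ r in (tm - τ)..(tm + τ), ‖f r‖ := by
    rw [hgτ]
    exact intervalIntegral.norm_integral_le_integral_norm (by linarith)
  have hlow : (2 * τ) * ‖f tm‖ - ‖F (tm + τ) - F (tm - τ)‖ ≤ ‖φ τ‖ := by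
    have h := norm_sub_norm_le ((2 * τ) • f tm) (F (tm + τ) - F (tm - τ))
    have h2 : ‖(2 * τ) • f tm‖ = (2 * τ) * ‖f tm‖ := by
      rw [norm_smul, Real.norm_eq_abs, abs_of_pos (by linarith)]
    have h3 : ‖(2 * τ) • f tm - (F (tm + τ) - F (tm - τ))‖ = ‖φ τ‖ := by
      simp only [hφdef]; rw [← norm_neg]; congr 1; abel
    linarith [h, h2 ▸ h3 ▸ h]
  have htotal : (2 * τ) * ‖f tm‖ ≤ (∫ r in (tm - τ)..(tm + τ), ‖f r‖) + M * τ * τ := by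
    linarith
  have h2τ : (0 : ℝ) < 2 * τ := by linarith
  have key : ‖f tm‖ ≤ ((∫ r in (tm - τ)..(tm + τ), ‖f r‖) + M * τ * τ) / (2 * τ) := by
    rw [le_div_iff₀ h2τ]; linarith
  rw [hι2]
  have hsplit : (∫ r in (tm - τ)..(tm + τ),
        (‖f r‖ + τ / 2 * ∫ r in (tm - τ)..(tm + τ), ‖deriv (deriv f) r‖))
      = (∫ r in (tm - τ)..(tm + τ), ‖f r‖) + M * τ * τ := by
    rw [intervalIntegral.integral_add (hfc.norm.intervalIntegrable _ _)
      intervalIntegrable_const, intervalIntegral.integral_const, ← hM, smul_eq_mul]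
    ring
  calc ‖f tm‖ ≤ ((∫ r in (tm - τ)..(tm + τ), ‖f r‖) + M * τ * τ) / (2 * τ) := key
    _ = 1 / (2 * τ) * ∫ r in (tm - τ)..(tm + τ),
          (‖f r‖ + τ / 2 * ∫ r in (tm - τ)..(tm + τ), ‖deriv (deriv f) r‖) := by
        rw [hsplit, one_div, inv_mul_eq_div]
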